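/- Every nonzero homomorphism of spaces of quantities ψ : Q → R induces a unique group homomorphism φ : 𝒟_Q → 𝒟_R satisfying dim_R ∘ ψ = φ ∘ dim_Q, and φ(1_{𝒟_Q}) = 1_{𝒟_R}; in particular ψ maps the dimensionless fiber of Q into the dimensionless fiber of R. -/

import Mathlib

/-- A space of quantities over a field `F` with group of dimensions `D`
(a finitely generated free abelian group): a set `Q` with a surjective
projection `dim : Q → D`, an abelian monoid product for which `dim` is a
monoid homomorphism, and on each fiber a one-dimensional `F`-vector space
structure (addition `add` and scalar multiplication `smul`, with `zero A`
the zero of the fiber over `A`), with the product distributing over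
fiberwise addition and associating with scalar multiplication. -/
structure QuantitySpace (F : Type*) [Field F] (D : Type*) [CommGroup D]
    [Module.Free ℤ (Additive D)] [Module.Finite ℤ (Additive D)]
    (Q : Type*) where
  dim : Q → D
  dim_surj : Function.Surjective dim
  mul : Q → Q → Q
  one : Q
  mul_comm : ∀ q r, mul q r = mul r q
  mul_assoc : ∀ q r s, mul (mul q r) s = mul q (mul r s)
  one_mul : ∀ q, mul one q = q
  dim_mul : ∀ q r, dim (mul q r) = dim q * dim r
  dim_one : dim one = 1
  add : Q → Q → Q
  smul : F → Q → Q
  zero : D → Q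
  dim_zero : ∀ A, dim (zero A) = A
  dim_add : ∀ q r, dim q = dim r → dim (add q r) = dim q
  dim_smul : ∀ (α : F) q, dim (smul α q) = dim q
  add_comm : ∀ q r, dim q = dim r → add q r = add r q
  add_assoc : ∀ q r s, dim q = dim r → dim r = dim s →
    add (add q r) s = add q (add r s)
  zero_add : ∀ q, add (zero (dim q)) q = q
  add_neg : ∀ q, add q (smul (-1) q) = zero (dim q)
  one_smul : ∀ q, smul 1 q = q
  mul_smul : ∀ (α β : F) q, smul (α * β) q = smul α (smul β q)
  smul_add : ∀ (α : F) q r, dim q = dim r →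
    smul α (add q r) = add (smul α q) (smul α r)
  add_smul : ∀ (α β : F) q, smul (α + β) q = add (smul α q) (smul β q)
  /-- each fiber contains a nonzero vector -/
  exists_nonzero : ∀ A : D, ∃ q, dim q = A ∧ q ≠ zero A
  /-- each fiber is one-dimensional: a nonzero vector spans it -/
  fiber_gen : ∀ q r, dim q = dim r → q ≠ zero (dim q) → ∃ α : F, r = smul α q
  /-- and a nonzero vector is free -/
  smul_injective : ∀ (α β : F) q, q ≠ zero (dim q) → smul α q = smul β q → α = β
  mul_add : ∀ q r s, dim r = dim s → mul q (add r s) = add (mul q r) (mul q s)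
  smul_mul : ∀ (α : F) q r, mul (smul α q) r = smul α (mul q r)

namespace QuantitySpace

variable {F : Type*} [Field F] {D D' : Type*} [CommGroup D] [CommGroup D']
  [Module.Free ℤ (Additive D)] [Module.Finite ℤ (Additive D)]
  [Module.Free ℤ (Additive D')] [Module.Finite ℤ (Additive D')]
  {Q R : Type*}

/-- `q` is a zero element, i.e. the zero of its fiber. -/
def IsZero (S : QuantitySpace F D Q) (q : Q) : Prop := q = S.zero (S.dim q)

/-- The space has no zero divisors: a product of nonzero quantities is nonzero. -/
def NoZeroDiv (S : QuantitySpace F D Q) : Prop :=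
  ∀ q r, ¬ S.IsZero q → ¬ S.IsZero r → ¬ S.IsZero (S.mul q r)

/-- A section of the space: `dim ∘ σ = id`. -/
def IsSection (S : QuantitySpace F D Q) (σ : D → Q) : Prop :=
  ∀ A, S.dim (σ A) = A

/-- A system of units: a nonzero section. -/
def IsNonzeroSection (S : QuantitySpace F D Q) (σ : D → Q) : Prop :=
  S.IsSection σ ∧ ∀ A, ¬ S.IsZero (σ A)

/-- A coherent section: a group homomorphism. -/
def IsCoherent (S : QuantitySpace F D Q) (σ : D → Q) : Prop :=
  σ 1 = S.one ∧ ∀ A B, σ (A * B) = S.mul (σ A) (σ B)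

/-- `T` is a subspace: with the operations of `Q` restricted to `T` and the
restricted projection, `T` is itself a space of quantities (closed under the
operations, contains the identity, the zeros and a nonzero element of each of
its fibers, and its set of dimensions is closed under inverses, so that it is
a subgroup). -/
def IsSubspace (S : QuantitySpace F D Q) (T : Set Q) : Prop :=
  S.one ∈ T ∧
  (∀ q ∈ T, ∀ r ∈ T, S.mul q r ∈ T) ∧
  (∀ q ∈ T, ∀ r ∈ T, S.dim q = S.dim r → S.add q r ∈ T) ∧
  (∀ (α : F), ∀ q ∈ T, S.smul α q ∈ T) ∧
  (∀ q ∈ T, S.zero (S.dim q) ∈ T) ∧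
  (∀ q ∈ T, ∃ r ∈ T, S.dim r = S.dim q ∧ r ≠ S.zero (S.dim q)) ∧
  (∀ q ∈ T, ∃ r ∈ T, S.dim r = (S.dim q)⁻¹)

/-- A homomorphism of spaces of quantities: multiplicative, fiber-preserving,
and `F`-linear on each fiber. -/
def IsHom (S : QuantitySpace F D Q) (T : QuantitySpace F D' R) (ψ : Q → R) : Prop :=
  (∀ q r, ψ (S.mul q r) = T.mul (ψ q) (ψ r)) ∧
  (∀ q₁ q₂, S.dim q₁ = S.dim q₂ → T.dim (ψ q₁) = T.dim (ψ q₂)) ∧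
  (∀ (α β : F) (q₁ q₂ : Q), S.dim q₁ = S.dim q₂ →
    ψ (S.add (S.smul α q₁) (S.smul β q₂)) = T.add (T.smul α (ψ q₁)) (T.smul β (ψ q₂)))

end QuantitySpace

variable {F : Type*} [Field F] {D D' : Type*} [CommGroup D] [CommGroup D']
  [Module.Free ℤ (Additive D)] [Module.Finite ℤ (Additive D)]
  [Module.Free ℤ (Additive D')] [Module.Finite ℤ (Additive D')]
  {Q R : Type*}
open QuantitySpace

theorem induced_dimension_hom (S : QuantitySpace F D Q) (T : QuantitySpace F D' R)
    (ψ : Q → R) (hψ : IsHom S T ψ) (hnz : ∃ q : Q, ¬ T.IsZero (ψ q)) :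
    (∃! φ : D →* D', ∀ q : Q, T.dim (ψ q) = φ (S.dim q)) ∧
    (∀ q : Q, S.dim q = 1 → T.dim (ψ q) = 1) := by
  classical
  set σ : D → Q := Function.surjInv S.dim_surj with hσ
  have hσdim : ∀ A : D, S.dim (σ A) = A := fun A =>
    Function.surjInv_eq S.dim_surj A
  set f : D → D' := fun A => T.dim (ψ (σ A)) with hf
  have key : ∀ q : Q, T.dim (ψ q) = f (S.dim q) := by
    intro q
    exact hψ.2.1 q (σ (S.dim q)) (hσdim _).symm
  have fmul : ∀ A B : D, f (A * B) = f A * f B := by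
    intro A B
    have h1 : S.dim (S.mul (σ A) (σ B)) = A * B := by
      rw [S.dim_mul, hσdim, hσdim]
    have h2 : f (A * B) = T.dim (ψ (S.mul (σ A) (σ B))) := by
      rw [key (S.mul (σ A) (σ B)), h1]
    rw [h2, hψ.1, T.dim_mul]
  have fone : f 1 = 1 := by
    have h := fmul 1 1
    rw [mul_one] at h
    exact (mul_eq_left.mp h.symm)
  refine ⟨⟨⟨⟨f, fone⟩, fmul⟩, fun q => key q, ?_⟩, ?_⟩
  · intro φ' hφ'
    ext A
    have h1 := (hφ' (σ A)).symm.trans (key (σ A))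
    rw [hσdim] at h1
    exact h1
  · intro q hq
    rw [key q, hq, fone]
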